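/- Let K, ξ ∈ ℝ with K ≠ 0 and ξ² < K²/4. Set ω_K = √(K²/4 − ξ²), λ₊ = ω_K/2 + i·ξ/2 and λ₋ = −ω_K/2 + i·ξ/2. Then for every A₀ ∈ ℂ there exists a unique pair (C₊, C₋) ∈ ℂ × ℂ with λ₊·C₊ = (K/4)·conj(C₊), λ₋·C₋ = (K/4)·conj(C₋) and C₊ + C₋ = A₀; moreover A(T) = C₊·e^{λ₊T} + C₋·e^{λ₋T} is the unique solution of A'(T) = (K/4)·e^{iξT}·conj(A(T)) with A(0) = A₀. -/

import Mathlib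

lemma exp_deriv_aux (lam : ℂ) (t : ℝ) :
    HasDerivAt (fun s : ℝ => Complex.exp (lam * s)) (lam * Complex.exp (lam * t)) t := by
  have hc : HasDerivAt (fun z : ℂ => Complex.exp (lam * z))
      (Complex.exp (lam * t) * (lam * 1)) (t : ℂ) :=
    (Complex.hasDerivAt_exp (lam * t)).comp _ ((hasDerivAt_id (t : ℂ)).const_mul lam)
  simpa [mul_comm] using hc.comp_ofReal

lemma lip_aux (c : ℂ) (ξ t : ℝ) :
    LipschitzWith ‖c‖₊ (fun z : ℂ => c * Complex.exp (Complex.I * ξ * t) * (starRingEnd ℂ) z) := by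
  apply LipschitzWith.of_dist_le_mul
  intro z w
  have he : ‖Complex.exp (Complex.I * ξ * t)‖ = 1 := by
    rw [show (Complex.I * ξ * t : ℂ) = ((ξ * t : ℝ) : ℂ) * Complex.I by push_cast; ring]
    exact Complex.norm_exp_ofReal_mul_I _
  simp only [dist_eq_norm, ← mul_sub, ← map_sub, norm_mul]
  rw [he, RCLike.norm_conj]
  simp [coe_nnnorm]

/-- In Case 2 (ξ² < K²/4), with ω_K = √(K²/4 − ξ²),
λ₊ = ω_K/2 + iξ/2, λ₋ = −ω_K/2 + iξ/2, for every A₀ there is a unique pair (C₊, C₋)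
with λ₊C₊ = (K/4)conj(C₊), λ₋C₋ = (K/4)conj(C₋), C₊ + C₋ = A₀; and
A(T) = C₊e^{λ₊T} + C₋e^{λ₋T} is the unique solution of A' = (K/4)e^{iξT}conj(A)
with A(0) = A₀. -/
theorem stmt_9 (K ξ : ℝ) (hK : K ≠ 0) (hξ : ξ ^ 2 < K ^ 2 / 4) (A₀ : ℂ) :
    (∃! p : ℂ × ℂ,
      ((((Real.sqrt (K ^ 2 / 4 - ξ ^ 2) / 2 : ℝ) : ℂ)
          + Complex.I * ((ξ / 2 : ℝ) : ℂ)) * p.1 =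
        ((K : ℂ) / 4) * (starRingEnd ℂ) p.1) ∧
      ((((-(Real.sqrt (K ^ 2 / 4 - ξ ^ 2)) / 2 : ℝ) : ℂ)
          + Complex.I * ((ξ / 2 : ℝ) : ℂ)) * p.2 =
        ((K : ℂ) / 4) * (starRingEnd ℂ) p.2) ∧
      p.1 + p.2 = A₀)
    ∧
    (∀ Cp Cm : ℂ,
      ((((Real.sqrt (K ^ 2 / 4 - ξ ^ 2) / 2 : ℝ) : ℂ)
          + Complex.I * ((ξ / 2 : ℝ) : ℂ)) * Cp =
        ((K : ℂ) / 4) * (starRingEnd ℂ) Cp) →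
      ((((-(Real.sqrt (K ^ 2 / 4 - ξ ^ 2)) / 2 : ℝ) : ℂ)
          + Complex.I * ((ξ / 2 : ℝ) : ℂ)) * Cm =
        ((K : ℂ) / 4) * (starRingEnd ℂ) Cm) →
      Cp + Cm = A₀ →
      ((∀ T : ℝ,
          HasDerivAt (fun t : ℝ =>
              Cp * Complex.exp ((((Real.sqrt (K ^ 2 / 4 - ξ ^ 2) / 2 : ℝ) : ℂ)
                  + Complex.I * ((ξ / 2 : ℝ) : ℂ)) * (t : ℂ))
                + Cm * Complex.exp ((((-(Real.sqrt (K ^ 2 / 4 - ξ ^ 2)) / 2 : ℝ) : ℂ)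
                  + Complex.I * ((ξ / 2 : ℝ) : ℂ)) * (t : ℂ)))
            (((K : ℂ) / 4) * Complex.exp (Complex.I * (ξ : ℂ) * (T : ℂ)) *
              (starRingEnd ℂ)
                (Cp * Complex.exp ((((Real.sqrt (K ^ 2 / 4 - ξ ^ 2) / 2 : ℝ) : ℂ)
                    + Complex.I * ((ξ / 2 : ℝ) : ℂ)) * (T : ℂ))
                  + Cm * Complex.exp ((((-(Real.sqrt (K ^ 2 / 4 - ξ ^ 2)) / 2 : ℝ) : ℂ)
                    + Complex.I * ((ξ / 2 : ℝ) : ℂ)) * (T : ℂ))))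
            T)
        ∧
        (∀ B : ℝ → ℂ,
          (∀ T : ℝ, HasDerivAt B
            (((K : ℂ) / 4) * Complex.exp (Complex.I * (ξ : ℂ) * (T : ℂ)) *
              (starRingEnd ℂ) (B T)) T) →
          B 0 = A₀ →
          ∀ T : ℝ, B T =
            Cp * Complex.exp ((((Real.sqrt (K ^ 2 / 4 - ξ ^ 2) / 2 : ℝ) : ℂ)
                + Complex.I * ((ξ / 2 : ℝ) : ℂ)) * (T : ℂ))
              + Cm * Complex.exp ((((-(Real.sqrt (K ^ 2 / 4 - ξ ^ 2)) / 2 : ℝ) : ℂ)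
                + Complex.I * ((ξ / 2 : ℝ) : ℂ)) * (T : ℂ))))) := by
  set ω : ℝ := Real.sqrt (K ^ 2 / 4 - ξ ^ 2) with hωdef
  have hωpos : 0 < ω := Real.sqrt_pos.mpr (by linarith)
  have hωsq : ω ^ 2 = K ^ 2 / 4 - ξ ^ 2 := Real.sq_sqrt (by linarith)
  set lp : ℂ := ((ω / 2 : ℝ) : ℂ) + Complex.I * ((ξ / 2 : ℝ) : ℂ) with hlp
  set lm : ℂ := (((-ω) / 2 : ℝ) : ℂ) + Complex.I * ((ξ / 2 : ℝ) : ℂ) with hlm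
  have hωC : (ω : ℂ) ≠ 0 := by exact_mod_cast hωpos.ne'
  have hdiff : lp - lm = (ω : ℂ) := by rw [hlp, hlm]; push_cast; ring
  have hωsqC : (ω : ℂ) ^ 2 = (K : ℂ) ^ 2 / 4 - (ξ : ℂ) ^ 2 := by exact_mod_cast hωsq
  have hI : (Complex.I) ^ 2 = -1 := Complex.I_sq
  have hmul : lp * lm = -((K : ℂ) ^ 2 / 16) := by
    rw [hlp, hlm]; push_cast
    linear_combination ((ξ : ℂ) ^ 2 / 4) * hI - (1 / 4) * hωsqC
  have hconjm : (starRingEnd ℂ) lm = -lp := by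
    rw [hlp, hlm]
    simp only [map_add, map_mul, Complex.conj_ofReal, Complex.conj_I]
    push_cast; ring
  have hconjp : (starRingEnd ℂ) lp = -lm := by
    rw [hlp, hlm]
    simp only [map_add, map_mul, Complex.conj_ofReal, Complex.conj_I]
    push_cast; ring
  -- the explicit pair
  set Cp₀ : ℂ := (((K : ℂ) / 4) * (starRingEnd ℂ) A₀ - lm * A₀) / (ω : ℂ) with hCp₀
  set Cm₀ : ℂ := (lp * A₀ - ((K : ℂ) / 4) * (starRingEnd ℂ) A₀) / (ω : ℂ) with hCm₀
  have hsum0 : Cp₀ + Cm₀ = A₀ := by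
    rw [hCp₀, hCm₀, ← add_div, div_eq_iff hωC]
    linear_combination A₀ * hdiff
  have hconjω : (starRingEnd ℂ) (ω : ℂ) = (ω : ℂ) := Complex.conj_ofReal ω
  have heig_p : lp * Cp₀ = ((K : ℂ) / 4) * (starRingEnd ℂ) Cp₀ := by
    rw [hCp₀, map_div₀, hconjω, ← mul_div_assoc, ← mul_div_assoc, div_eq_div_iff hωC hωC]
    simp only [map_sub, map_mul, map_div₀, map_ofNat, Complex.conj_conj, Complex.conj_ofReal]
    linear_combination ((ω : ℂ)) * ((-A₀) * hmul + (((K : ℂ) / 4 * (starRingEnd ℂ) A₀)) * hconjm)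
  have heig_m : lm * Cm₀ = ((K : ℂ) / 4) * (starRingEnd ℂ) Cm₀ := by
    rw [hCm₀, map_div₀, hconjω, ← mul_div_assoc, ← mul_div_assoc, div_eq_div_iff hωC hωC]
    simp only [map_sub, map_mul, map_div₀, map_ofNat, Complex.conj_conj, Complex.conj_ofReal]
    linear_combination ((ω : ℂ)) * (A₀ * hmul - (((K : ℂ) / 4 * (starRingEnd ℂ) A₀)) * hconjp)
  constructor
  · -- unique pair
    refine ⟨(Cp₀, Cm₀), ⟨heig_p, heig_m, hsum0⟩, ?_⟩
    rintro ⟨q1, q2⟩ ⟨hq1, hq2, hq3⟩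
    simp only at hq1 hq2 hq3 ⊢
    have hc3 : (starRingEnd ℂ) q1 + (starRingEnd ℂ) q2 = (starRingEnd ℂ) A₀ := by
      rw [← map_add, hq3]
    have h1 : q1 = Cp₀ := by
      rw [hCp₀, eq_div_iff hωC]
      linear_combination hq1 + hq2 + ((K : ℂ) / 4) * hc3 - lm * hq3 - q1 * hdiff
    have h2 : q2 = Cm₀ := by
      have : q2 = A₀ - q1 := by linear_combination hq3
      rw [this, h1, ← hsum0]; ring
    exact Prod.ext h1 h2
  · -- the ODE part
    intro Cp Cm hCp hCm hsum
    have hderiv : ∀ T : ℝ,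
        HasDerivAt (fun t : ℝ => Cp * Complex.exp (lp * (t : ℂ)) + Cm * Complex.exp (lm * (t : ℂ)))
          (((K : ℂ) / 4) * Complex.exp (Complex.I * (ξ : ℂ) * (T : ℂ)) *
            (starRingEnd ℂ) (Cp * Complex.exp (lp * (T : ℂ)) + Cm * Complex.exp (lm * (T : ℂ)))) T := by
      intro T
      have h := ((exp_deriv_aux lp T).const_mul Cp).add ((exp_deriv_aux lm T).const_mul Cm)
      refine h.congr_deriv (Eq.symm ?_)
      have key1 : Complex.exp (Complex.I * (ξ : ℂ) * (T : ℂ)) *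
          Complex.exp ((starRingEnd ℂ) lp * (T : ℂ)) = Complex.exp (lp * (T : ℂ)) := by
        rw [← Complex.exp_add]
        congr 1
        rw [hconjp, hlp, hlm]; push_cast; ring
      have key2 : Complex.exp (Complex.I * (ξ : ℂ) * (T : ℂ)) *
          Complex.exp ((starRingEnd ℂ) lm * (T : ℂ)) = Complex.exp (lm * (T : ℂ)) := by
        rw [← Complex.exp_add]
        congr 1
        rw [hconjm, hlp, hlm]; push_cast; ring
      simp only [map_add, map_mul, ← Complex.exp_conj, Complex.conj_ofReal]
      linear_combination (-(Complex.exp (lp * (T : ℂ)))) * hCp - (Complex.exp (lm * (T : ℂ))) * hCm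
        + ((K : ℂ) / 4 * (starRingEnd ℂ) Cp) * key1 + ((K : ℂ) / 4 * (starRingEnd ℂ) Cm) * key2
    refine ⟨hderiv, ?_⟩
    intro B hB hB0 T
    set v : ℝ → ℂ → ℂ := fun t z =>
      ((K : ℂ) / 4) * Complex.exp (Complex.I * (ξ : ℂ) * (t : ℂ)) * (starRingEnd ℂ) z with hv
    set g : ℝ → ℂ := fun t => Cp * Complex.exp (lp * (t : ℂ)) + Cm * Complex.exp (lm * (t : ℂ))
      with hg
    have hlipv : ∀ t : ℝ, LipschitzOnWith ‖(K : ℂ) / 4‖₊ (v t) Set.univ :=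
      fun t => (lip_aux ((K : ℂ) / 4) ξ t).lipschitzOnWith
    have hT0 : (0 : ℝ) ∈ Set.Ioo (-(|T| + 1)) (|T| + 1) := by
      constructor <;> [skip; skip] <;> [nlinarith [abs_nonneg T]; nlinarith [abs_nonneg T]]
    have hTmem : T ∈ Set.Icc (-(|T| + 1)) (|T| + 1) := by
      constructor
      · nlinarith [neg_abs_le T]
      · nlinarith [le_abs_self T]
    have heq0 : B 0 = g 0 := by
      rw [hB0, hg]
      simp only [Complex.ofReal_zero, mul_zero, Complex.exp_zero, mul_one]
      exact hsum.symm
    have := ODE_solution_unique_of_mem_Icc (v := v) (s := fun _ => Set.univ)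
      (K := ‖(K : ℂ) / 4‖₊) (fun t _ => hlipv t) hT0
      (Continuous.continuousOn (by
        refine continuous_iff_continuousAt.mpr fun t => (hB t).continuousAt))
      (fun t _ => hB t) (fun _ _ => trivial)
      (Continuous.continuousOn (by
        refine continuous_iff_continuousAt.mpr fun t => (hderiv t).continuousAt))
      (fun t _ => hderiv t) (fun _ _ => trivial) heq0
    exact this hTmem
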